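/- A spiral crosses its osculating circles from right to left: Let γ : ℝ → ℝ^2 be a unit-speed plane curve whose signed curvature k is nondecreasing on an interval I. Then for all s₀, s ∈ I: if s ≥ s₀ then det(γ'(s₀), γ(s) − γ(s₀)) ≥ (k(s₀)/2)·‖γ(s) − γ(s₀)‖² (the point γ(s) lies on or to the left of the directed osculating circle of γ at s₀), and if s ≤ s₀ then det(γ'(s₀), γ(s) − γ(s₀)) ≤ (k(s₀)/2)·‖γ(s) − γ(s₀)‖² (the point γ(s) lies on or to the right of that circle). -/

import Mathlib

open scoped InnerProductSpace

/-- Planar cross product: `det((a₁,a₂),(b₁,b₂)) = a₁·b₂ − a₂·b₁`. -/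
noncomputable def det2 (a b : EuclideanSpace ℝ (Fin 2)) : ℝ :=
  a 0 * b 1 - a 1 * b 0

/-- Signed curvature of a unit-speed plane curve: `k(s) = det(γ'(s), γ''(s))`. -/
noncomputable def signedCurv (γ : ℝ → EuclideanSpace ℝ (Fin 2)) (s : ℝ) : ℝ :=
  det2 (deriv γ s) (deriv (deriv γ) s)

section Aux

open intervalIntegral MeasureTheory


lemma step1 (k B B' : ℝ → ℝ) (u v : ℝ)
    (hk : MonotoneOn k (Set.Icc u v))
    (hB0 : ∀ w, 0 ≤ B w)
    (hB : ∀ w, HasDerivAt B (B' w) w)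
    (hB'c : Continuous B') (hkc : Continuous k)
    (M : ℝ) (hM : ∀ w ∈ Set.Icc u v, |B' w| ≤ M)
    (p q : ℝ) (hup : u ≤ p) (hpq : p ≤ q) (hqv : q ≤ v) :
    ∫ w in p..q, k w * B' w ≤
      k q * B q - k p * B p + (k q - k p) * (M * (q - p)) := by
  have hsub : Set.Icc p q ⊆ Set.Icc u v := Set.Icc_subset_Icc hup hqv
  have int1 : IntervalIntegrable (fun w => k w * B' w) volume p q :=
    (hkc.mul hB'c).intervalIntegrable p q
  have intB' : IntervalIntegrable B' volume p q := hB'c.intervalIntegrable p q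
  have intmax : IntervalIntegrable (fun w => max (B' w) 0) volume p q :=
    (hB'c.max continuous_const).intervalIntegrable p q
  have intmin : IntervalIntegrable (fun w => min (B' w) 0) volume p q :=
    (hB'c.min continuous_const).intervalIntegrable p q
  have hFTC : ∫ w in p..q, B' w = B q - B p :=
    integral_eq_sub_of_hasDerivAt (fun w _ => hB w) intB'
  set P := ∫ w in p..q, max (B' w) 0 with hP
  set Nm := ∫ w in p..q, min (B' w) 0 with hNm
  have hPN : P + Nm = B q - B p := by
    rw [hP, hNm, ← intervalIntegral.integral_add intmax intmin, ← hFTC]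
    congr 1; funext w; simp [max_add_min]
  have hmemp : p ∈ Set.Icc u v := ⟨hup, hpq.trans hqv⟩
  have hmemq : q ∈ Set.Icc u v := ⟨hup.trans hpq, hqv⟩
  have hkpq : k p ≤ k q := hk hmemp hmemq hpq
  -- pointwise bound
  have h1 : ∫ w in p..q, k w * B' w ≤
      ∫ w in p..q, (k q * max (B' w) 0 + k p * min (B' w) 0) := by
    apply intervalIntegral.integral_mono_on hpq int1
    · exact ((continuous_const.mul (hB'c.max continuous_const)).add
        (continuous_const.mul (hB'c.min continuous_const))).intervalIntegrable p q
    · intro w hw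
      have h2 : k p ≤ k w := hk hmemp (hsub hw) hw.1
      have h3 : k w ≤ k q := hk (hsub hw) hmemq hw.2
      rcases le_total 0 (B' w) with h | h
      · rw [max_eq_left h, min_eq_right h]
        nlinarith
      · rw [max_eq_right h, min_eq_left h]
        nlinarith
  have h4 : ∫ w in p..q, (k q * max (B' w) 0 + k p * min (B' w) 0)
      = k q * P + k p * Nm := by
    rw [intervalIntegral.integral_add (intmax.const_mul _) (intmin.const_mul _),
      intervalIntegral.integral_const_mul, intervalIntegral.integral_const_mul]
  have hNmlb : -(M * (q - p)) ≤ Nm := by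
    have : ∫ w in p..q, (-M) ≤ Nm := by
      apply intervalIntegral.integral_mono_on hpq
        (intervalIntegrable_const) intmin
      intro w hw
      have := hM w (hsub hw)
      have := abs_le.mp this
      simp only [le_min_iff]
      constructor
      · linarith [this.1]
      · nlinarith [hM w (hsub hw), abs_nonneg (B' w), le_abs_self (B' w)]
    simpa [mul_comm] using this
  have hBp := hB0 p
  have h5 : ∫ w in p..q, k w * B' w ≤ k q * P + k p * Nm := h4 ▸ h1
  have hprod : 0 ≤ (k q - k p) * (M * (q - p) + Nm + B p) :=
    mul_nonneg (sub_nonneg.mpr hkpq) (by linarith)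
  calc ∫ w in p..q, k w * B' w ≤ k q * P + k p * Nm := h5
    _ = k q * (B q - B p - Nm) + k p * Nm := by rw [show P = B q - B p - Nm by linarith]
    _ ≤ k q * B q - k p * B p + (k q - k p) * (M * (q - p)) := by nlinarith [hprod]

lemma core (k B B' : ℝ → ℝ) (u v : ℝ) (huv : u ≤ v)
    (hk : MonotoneOn k (Set.Icc u v))
    (hB0 : ∀ w, 0 ≤ B w)
    (hB : ∀ w, HasDerivAt B (B' w) w)
    (hB'c : Continuous B') (hkc : Continuous k) :
    ∫ w in u..v, k w * B' w ≤ k v * B v - k u * B u := by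
  obtain ⟨M, hM⟩ : ∃ M, ∀ w ∈ Set.Icc u v, |B' w| ≤ M :=
    isCompact_Icc.exists_bound_of_continuousOn hB'c.continuousOn
  have hM0 : 0 ≤ M := le_trans (abs_nonneg _) (hM u ⟨le_rfl, huv⟩)
  have hku : k u ≤ k v := hk ⟨le_rfl, huv⟩ ⟨huv, le_rfl⟩ huv
  have key : ∀ n : ℕ, 1 ≤ n →
      ∫ w in u..v, k w * B' w ≤
        k v * B v - k u * B u + (k v - k u) * (M * ((v - u) / n)) := by
    intro n hn
    have hn0 : (n : ℝ) ≠ 0 := Nat.cast_ne_zero.mpr (by omega)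
    set δ := (v - u) / n with hδ
    have hδ0 : 0 ≤ δ := div_nonneg (by linarith) (Nat.cast_nonneg n)
    set t : ℕ → ℝ := fun i => u + i * δ with ht
    have ht0 : t 0 = u := by simp [ht]
    have htn : t n = v := by
      simp only [ht, hδ]; field_simp; ring
    have htmem : ∀ i ≤ n, t i ∈ Set.Icc u v := by
      intro i hi
      constructor
      · simp [ht]; positivity
      · have : (i : ℝ) * δ ≤ (n : ℝ) * δ := by
          apply mul_le_mul_of_nonneg_right _ hδ0
          exact_mod_cast hi
        have hnδ : (n : ℝ) * δ = v - u := by rw [hδ]; field_simp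
        simp only [ht]; linarith
    have hstep : ∀ i, i + 1 ≤ n → t (i + 1) - t i = δ := by
      intro i hi; simp [ht]; ring
    have hsplit : ∑ i ∈ Finset.range n,
        ∫ w in t i..t (i+1), k w * B' w = ∫ w in (t 0)..(t n), k w * B' w :=
      intervalIntegral.sum_integral_adjacent_intervals
        (fun i _ => (hkc.mul hB'c).intervalIntegrable _ _)
    have hbound : ∀ i ∈ Finset.range n,
        ∫ w in t i..t (i+1), k w * B' w ≤
          (k (t (i+1)) * B (t (i+1)) - k (t i) * B (t i))
            + ((k (t (i+1)) - k (t i)) * (M * δ)) := by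
      intro i hi
      have hi' : i + 1 ≤ n := Finset.mem_range.mp hi
      have h1 := htmem i (by omega)
      have h2 := htmem (i+1) hi'
      have h3 : t i ≤ t (i+1) := by
        have := hstep i hi'; linarith
      have := step1 k B B' u v hk hB0 hB hB'c hkc M hM (t i) (t (i+1))
        h1.1 h3 h2.2
      calc ∫ w in t i..t (i+1), k w * B' w
          ≤ k (t (i+1)) * B (t (i+1)) - k (t i) * B (t i)
            + (k (t (i+1)) - k (t i)) * (M * (t (i+1) - t i)) := this
        _ = _ := by rw [hstep i hi']
    calc ∫ w in u..v, k w * B' w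
        = ∑ i ∈ Finset.range n, ∫ w in t i..t (i+1), k w * B' w := by
          rw [hsplit, ht0, htn]
      _ ≤ ∑ i ∈ Finset.range n,
            ((k (t (i+1)) * B (t (i+1)) - k (t i) * B (t i))
              + ((k (t (i+1)) - k (t i)) * (M * δ))) :=
          Finset.sum_le_sum hbound
      _ = (k (t n) * B (t n) - k (t 0) * B (t 0))
            + ((k (t n) - k (t 0)) * (M * δ)) := by
          rw [Finset.sum_add_distrib, Finset.sum_range_sub (fun i => k (t i) * B (t i)),
            ← Finset.sum_mul, Finset.sum_range_sub (fun i => k (t i))]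
      _ = k v * B v - k u * B u + (k v - k u) * (M * δ) := by rw [ht0, htn]
  have htend : Filter.Tendsto
      (fun n : ℕ => k v * B v - k u * B u + (k v - k u) * (M * ((v - u) / n)))
      Filter.atTop (nhds (k v * B v - k u * B u)) := by
    have h0 : Filter.Tendsto (fun n : ℕ => ((v - u) : ℝ) / n) Filter.atTop (nhds 0) :=
      tendsto_const_div_atTop_nhds_zero_nat _
    have h1 := ((h0.const_mul M).const_mul (k v - k u)).const_add
      (k v * B v - k u * B u)
    simpa using h1
  exact ge_of_tendsto htend (Filter.eventually_atTop.mpr ⟨1, fun n hn => key n hn⟩)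

lemma coordD {f : ℝ → EuclideanSpace ℝ (Fin 2)} {f' : EuclideanSpace ℝ (Fin 2)} {u : ℝ}
    (h : HasDerivAt f f' u) (i : Fin 2) : HasDerivAt (fun w => f w i) (f' i) u := by
  exact ((EuclideanSpace.proj (𝕜 := ℝ) i).hasFDerivAt.comp_hasDerivAt u h)

lemma nsq (x : EuclideanSpace ℝ (Fin 2)) : ‖x‖ ^ 2 = x 0 ^ 2 + x 1 ^ 2 := by
  rw [EuclideanSpace.norm_eq, Real.sq_sqrt (by positivity)]
  simp [Fin.sum_univ_two, sq_abs]

lemma Fmono (γ : ℝ → EuclideanSpace ℝ (Fin 2)) (hγ : ContDiff ℝ 2 γ)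
    (hunit : ∀ s, ‖deriv γ s‖ = 1)
    (a b : ℝ) (hmono : MonotoneOn (signedCurv γ) (Set.Icc a b))
    (s u v : ℝ) (hu : u ∈ Set.Icc a b) (hv : v ∈ Set.Icc a b) (huv : u ≤ v) :
    det2 (deriv γ v) (γ s - γ v) - signedCurv γ v / 2 * ‖γ s - γ v‖ ^ 2 ≤
      det2 (deriv γ u) (γ s - γ u) - signedCurv γ u / 2 * ‖γ s - γ u‖ ^ 2 := by
  have h2 : (2 : WithTop ℕ∞) = 1 + 1 := by norm_num
  rw [h2, contDiff_succ_iff_deriv] at hγ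
  have hdγ : Differentiable ℝ γ := hγ.1
  have hT : Differentiable ℝ (deriv γ) := (contDiff_one_iff_deriv.mp hγ.2.2).1
  have hT'c : Continuous (deriv (deriv γ)) := (contDiff_one_iff_deriv.mp hγ.2.2).2
  have hTc : Continuous (deriv γ) := hT.continuous
  have hTd : ∀ w, HasDerivAt γ (deriv γ w) w := fun w => (hdγ w).hasDerivAt
  have hT'd : ∀ w, HasDerivAt (deriv γ) (deriv (deriv γ) w) w := fun w => (hT w).hasDerivAt
  have hcont : ∀ (f : ℝ → EuclideanSpace ℝ (Fin 2)), Continuous f →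
      ∀ i : Fin 2, Continuous fun w => f w i := fun f hf i =>
    (EuclideanSpace.proj (𝕜 := ℝ) i).continuous.comp hf
  have hunit2 : ∀ w, deriv γ w 0 ^ 2 + deriv γ w 1 ^ 2 = 1 := fun w => by
    rw [← nsq, hunit w]; norm_num
  have horth : ∀ w, deriv γ w 0 * deriv (deriv γ) w 0
      + deriv γ w 1 * deriv (deriv γ) w 1 = 0 := by
    intro w
    have hg : HasDerivAt (fun z => deriv γ z 0 ^ 2 + deriv γ z 1 ^ 2)
        (2 * (deriv γ w 0 * deriv (deriv γ) w 0 + deriv γ w 1 * deriv (deriv γ) w 1)) w := by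
      have h0 := (coordD (hT'd w) 0).pow 2
      have h1 := (coordD (hT'd w) 1).pow 2
      convert h0.add h1 using 1
      rfl
      rfl
      rfl
      ring
    have heq : (fun z => deriv γ z 0 ^ 2 + deriv γ z 1 ^ 2) = fun _ => (1:ℝ) :=
      funext hunit2
    rw [heq] at hg
    have := hg.unique (hasDerivAt_const w 1)
    linarith
  have hkval : ∀ w, signedCurv γ w =
      deriv γ w 0 * deriv (deriv γ) w 1 - deriv γ w 1 * deriv (deriv γ) w 0 :=
    fun w => rfl
  have hc0 : ∀ w, deriv (deriv γ) w 0 = -(signedCurv γ w) * deriv γ w 1 := by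
    intro w
    rw [hkval w]
    linear_combination deriv γ w 0 * horth w - deriv (deriv γ) w 0 * hunit2 w
  have hc1 : ∀ w, deriv (deriv γ) w 1 = signedCurv γ w * deriv γ w 0 := by
    intro w
    rw [hkval w]
    linear_combination deriv γ w 1 * horth w - deriv (deriv γ) w 1 * hunit2 w
  -- the comparison functions
  set k : ℝ → ℝ := signedCurv γ with hk
  set A : ℝ → ℝ := fun w => det2 (deriv γ w) (γ s - γ w) with hA
  set B : ℝ → ℝ := fun w => ‖γ s - γ w‖ ^ 2 with hB
  set B' : ℝ → ℝ := fun w =>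
    -2 * (deriv γ w 0 * (γ s 0 - γ w 0) + deriv γ w 1 * (γ s 1 - γ w 1)) with hB'
  have hkc : Continuous k :=
    ((hcont _ hTc 0).mul (hcont _ hT'c 1)).sub ((hcont _ hTc 1).mul (hcont _ hT'c 0))
  have hγc : Continuous γ := hdγ.continuous
  have hB'c : Continuous B' := by
    apply continuous_const.mul
    exact ((hcont _ hTc 0).mul (continuous_const.sub (hcont _ hγc 0))).add
      ((hcont _ hTc 1).mul (continuous_const.sub (hcont _ hγc 1)))
  have hB0 : ∀ w, 0 ≤ B w := fun w => by positivity
  have hBfun : B = fun w => (γ s 0 - γ w 0) ^ 2 + (γ s 1 - γ w 1) ^ 2 := by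
    funext w
    rw [hB]
    simp only [nsq]
    simp
  have hBd : ∀ w, HasDerivAt B (B' w) w := by
    intro w
    rw [hBfun]
    have hx : HasDerivAt (fun z => γ s 0 - γ z 0) (0 - deriv γ w 0) w :=
      (hasDerivAt_const w _).sub (coordD (hTd w) 0)
    have hy : HasDerivAt (fun z => γ s 1 - γ z 1) (0 - deriv γ w 1) w :=
      (hasDerivAt_const w _).sub (coordD (hTd w) 1)
    convert (hx.pow 2).add (hy.pow 2) using 1
    rfl
    rfl
    rfl
    rw [hB']
    ring
  have hAfun : A = fun w =>
      deriv γ w 0 * (γ s 1 - γ w 1) - deriv γ w 1 * (γ s 0 - γ w 0) := by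
    funext w
    rw [hA]
    simp [det2]
  have hAd : ∀ w, HasDerivAt A (k w / 2 * B' w) w := by
    intro w
    rw [hAfun]
    have hx : HasDerivAt (fun z => γ s 0 - γ z 0) (0 - deriv γ w 0) w :=
      (hasDerivAt_const w _).sub (coordD (hTd w) 0)
    have hy : HasDerivAt (fun z => γ s 1 - γ z 1) (0 - deriv γ w 1) w :=
      (hasDerivAt_const w _).sub (coordD (hTd w) 1)
    convert ((coordD (hT'd w) 0).mul hy).sub ((coordD (hT'd w) 1).mul hx) using 1
    rfl
    rfl
    rfl
    rw [hB', hc0 w, hc1 w, hk]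
    ring
  have hkmono : MonotoneOn k (Set.Icc u v) :=
    hmono.mono (Set.Icc_subset_Icc hu.1 hv.2)
  have hcore := core k B B' u v huv hkmono hB0 hBd hB'c hkc
  have hFTC : ∫ w in u..v, k w / 2 * B' w = A v - A u :=
    integral_eq_sub_of_hasDerivAt (fun w _ => hAd w)
      (((hkc.div_const 2).mul hB'c).intervalIntegrable u v)
  have hhalf : ∫ w in u..v, k w / 2 * B' w = (1/2) * ∫ w in u..v, k w * B' w := by
    rw [← intervalIntegral.integral_const_mul]
    congr 1
    funext w
    ring
  show A v - k v / 2 * B v ≤ A u - k u / 2 * B u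
  linarith

end Aux

/-- A spiral crosses its osculating circles from right to left: for a
unit-speed curve with nondecreasing signed curvature on an interval,
`γ(s)` lies on or to the left (resp. right) of the directed osculating
circle at `γ(s₀)` for `s ≥ s₀` (resp. `s ≤ s₀`). -/
theorem spiral_crosses_osculating_circles
    (γ : ℝ → EuclideanSpace ℝ (Fin 2)) (hγ : ContDiff ℝ 2 γ)
    (hunit : ∀ s, ‖deriv γ s‖ = 1)
    (a b : ℝ) (hmono : MonotoneOn (signedCurv γ) (Set.Icc a b))
    (s₀ s : ℝ) (hs₀ : s₀ ∈ Set.Icc a b) (hs : s ∈ Set.Icc a b) :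
    (s₀ ≤ s →
      signedCurv γ s₀ / 2 * ‖γ s - γ s₀‖ ^ 2 ≤ det2 (deriv γ s₀) (γ s - γ s₀)) ∧
    (s ≤ s₀ →
      det2 (deriv γ s₀) (γ s - γ s₀) ≤ signedCurv γ s₀ / 2 * ‖γ s - γ s₀‖ ^ 2) := by
  have hz : det2 (deriv γ s) (γ s - γ s) - signedCurv γ s / 2 * ‖γ s - γ s‖ ^ 2 = 0 := by
    simp [det2]
  constructor
  · intro h
    have := Fmono γ hγ hunit a b hmono s s₀ s hs₀ hs h
    linarith
  · intro h
    have := Fmono γ hγ hunit a b hmono s s s₀ hs hs₀ h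
    linarith
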